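/- Let m ≥ 1 and let d_1,…,d_m be positive integers. For a numerical semigroup S = ⟨d_1,…,d_m⟩ with Hilbert numerator Q_S and p ≥ 0, the coefficient identity C_{m+p}(S)/(m+p)! = ((-1)^m/p!)·(d_1⋯d_m)·( (2^{p+1}/(p+1))·T_{p+1}(δ) + Σ_{r=0}^p C(p,r)·T_{p-r}(σ)·G_r(S) ) holds. -/

import Mathlib

open PowerSeries
open scoped Classical

/-- Substitute `z = e^t`: replace each monomial `z^k` of `Q` by `exp (k*t)` in `ℚ[[t]]`. -/
noncomputable def expSubst (Q : Polynomial ℚ) : PowerSeries ℚ :=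
  Q.sum fun k c => c • PowerSeries.rescale (k : ℚ) (PowerSeries.exp ℚ)

/-- The power series `(e^{x t} - 1)/(x t) = Σ_{n≥0} x^n t^n/(n+1)!`. -/
noncomputable def expDivFactor (x : ℚ) : PowerSeries ℚ :=
  PowerSeries.mk fun n => x ^ n / (Nat.factorial (n + 1) : ℚ)

/-- `A(t) = ∏ i (e^{d_i t}-1)/(d_i t)`. -/
noncomputable def Aser {m : ℕ} (d : Fin m → ℕ) : PowerSeries ℚ :=
  ∏ i, expDivFactor (d i)

/-- `B(t) = (t/(e^t-1)) · A(t)`. -/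
noncomputable def Bser {m : ℕ} (d : Fin m → ℕ) : PowerSeries ℚ :=
  (expDivFactor 1)⁻¹ * Aser d

/-- `C_r = Σ_k k^r · [z^k](1 - Q)`, the alternating syzygy power sum. -/
noncomputable def Csum (Q : Polynomial ℚ) (r : ℕ) : ℚ :=
  ((1 : Polynomial ℚ) - Q).sum fun k c => (k : ℚ) ^ r * c

/-- The Hilbert series `Σ_{s ∈ S} z^s` of a set `S ⊆ ℕ`. -/
noncomputable def hilbertSeries (S : Set ℕ) : PowerSeries ℚ :=
  PowerSeries.mk fun n => if n ∈ S then (1 : ℚ) else 0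

lemma expSubst_eq_aeval (P : Polynomial ℚ) :
    expSubst P = Polynomial.aeval (PowerSeries.exp ℚ) P := by
  rw [expSubst, Polynomial.aeval_def, Polynomial.eval₂_eq_sum]
  unfold Polynomial.sum
  refine Finset.sum_congr rfl ?_
  intro k _
  show P.coeff k • (rescale (k:ℚ)) (exp ℚ) = algebraMap ℚ _ (P.coeff k) * exp ℚ ^ k
  rw [exp_pow_eq_rescale_exp]
  ext n
  rw [PowerSeries.algebraMap_apply, PowerSeries.coeff_C_mul]
  simp [smul_eq_mul]

lemma coeff_aeval_exp (P : Polynomial ℚ) (n : ℕ) :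
    PowerSeries.coeff n (Polynomial.aeval (PowerSeries.exp ℚ) P)
      = P.sum fun k c => c * (k : ℚ) ^ n / (Nat.factorial n : ℚ) := by
  rw [← expSubst_eq_aeval, expSubst, Polynomial.sum, map_sum, Polynomial.sum]
  refine Finset.sum_congr rfl fun k _ => ?_
  simp [coeff_rescale, coeff_exp, div_eq_mul_inv]
  ring

lemma aeval_one_sub_X_pow (d : ℕ) :
    Polynomial.aeval (PowerSeries.exp ℚ) ((1 - Polynomial.X ^ d : Polynomial ℚ))
      = PowerSeries.C (-(d : ℚ)) * (PowerSeries.X * expDivFactor d) := by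
  simp only [map_sub, map_one, map_pow, Polynomial.aeval_X]
  rw [exp_pow_eq_rescale_exp]
  ext n
  rw [PowerSeries.coeff_C_mul]
  cases n with
  | zero =>
      rw [map_sub, coeff_rescale, coeff_exp]
      simp [PowerSeries.coeff_zero_eq_constantCoeff]
  | succ n =>
      rw [coeff_succ_X_mul]
      simp [coeff_rescale, coeff_exp, expDivFactor, Nat.factorial_succ, pow_succ,
        div_eq_mul_inv]
      ring

lemma constCoeff_expDivFactor (x : ℚ) :
    PowerSeries.constantCoeff (expDivFactor x) = 1 := by
  simp [expDivFactor]

lemma aeval_prod_one_sub_X_pow {m : ℕ} (d : Fin m → ℕ) :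
    Polynomial.aeval (PowerSeries.exp ℚ) (∏ i, (1 - Polynomial.X ^ d i : Polynomial ℚ))
      = PowerSeries.C ((-1) ^ m * ∏ i, (d i : ℚ)) * (PowerSeries.X ^ m * Aser d) := by
  rw [map_prod]
  simp only [aeval_one_sub_X_pow]
  rw [Finset.prod_mul_distrib, Finset.prod_mul_distrib, ← map_prod, Finset.prod_const,
    Finset.card_univ, Fintype.card_fin]
  congr 2
  rw [show ((-1:ℚ))^m = ∏ _i : Fin m, (-1:ℚ) by
    rw [Finset.prod_const, Finset.card_univ, Fintype.card_fin], ← Finset.prod_mul_distrib]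
  exact Finset.prod_congr rfl fun i _ => by ring

lemma coe_prod_ps {m : ℕ} (f : Fin m → Polynomial ℚ) :
    ((∏ i, f i : Polynomial ℚ) : PowerSeries ℚ) = ∏ i, ((f i : PowerSeries ℚ)) := by
  rw [← Polynomial.coeToPowerSeries.ringHom_apply, map_prod]
  rfl

lemma one_sub_X_mul_mk_one :
    ((1 : PowerSeries ℚ) - PowerSeries.X) * PowerSeries.mk (fun _ => (1 : ℚ)) = 1 := by
  ext n
  rw [sub_mul, one_mul, map_sub]
  cases n with
  | zero => simp
  | succ n => simp [coeff_succ_X_mul, PowerSeries.coeff_one]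

lemma hilbert_add_gaps (T : Set ℕ) (hfin : {n | n ∉ T}.Finite) :
    hilbertSeries T
        + ((∑ g ∈ hfin.toFinset, Polynomial.X ^ g : Polynomial ℚ) : PowerSeries ℚ)
      = PowerSeries.mk fun _ => (1 : ℚ) := by
  ext n
  rw [map_add, Polynomial.coeff_coe, Polynomial.finset_sum_coeff]
  simp only [Polynomial.coeff_X_pow, hilbertSeries, PowerSeries.coeff_mk]
  rw [Finset.sum_ite_eq hfin.toFinset n (fun _ => (1:ℚ))]
  by_cases h : n ∈ T <;> simp [h, Set.Finite.mem_toFinset]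


theorem stmt_19 (m : ℕ) (hm : 1 ≤ m) (d : Fin m → ℕ) (hd : ∀ i, 0 < d i)
    (hgcd : Finset.univ.gcd d = 1)
    (S : AddSubmonoid ℕ) (hS : (S : Set ℕ) = AddSubmonoid.closure (Set.range d))
    (hfin : {n : ℕ | n ∉ S}.Finite)
    (Q : Polynomial ℚ)
    (hQ : hilbertSeries (S : Set ℕ) * ∏ i, (1 - (PowerSeries.X : PowerSeries ℚ) ^ d i)
        = (Q : PowerSeries ℚ))
    (p : ℕ) :
    Csum Q (m + p) / (Nat.factorial (m + p) : ℚ)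
      = ((-1) ^ m / (Nat.factorial p : ℚ)) * (∏ i, (d i : ℚ))
          * ((2 ^ (p + 1) / ((p : ℚ) + 1))
                * ((Nat.factorial (p + 1) : ℚ) / 2 ^ (p + 1)
                    * PowerSeries.coeff (p + 1) (Bser d))
              + ∑ r ∈ Finset.range (p + 1), (p.choose r : ℚ)
                  * ((Nat.factorial (p - r) : ℚ) * PowerSeries.coeff (p - r) (Aser d))
                  * (∑ g ∈ hfin.toFinset, (g : ℚ) ^ r)) := by
  obtain ⟨m', rfl⟩ : ∃ m', m = m' + 1 := ⟨m - 1, (Nat.succ_pred_eq_of_pos hm).symm⟩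
  set F : Polynomial ℚ := ∏ i, (1 - Polynomial.X ^ d i) with hFdef
  set Pg : Polynomial ℚ := ∑ g ∈ hfin.toFinset, Polynomial.X ^ g with hPgdef
  set D : ℚ := ∏ i, (d i : ℚ) with hDdef
  -- (1 - X) divides F
  have hdvdF : (1 - Polynomial.X : Polynomial ℚ) ∣ F := by
    refine dvd_trans ?_ (Finset.dvd_prod_of_mem (fun i => 1 - Polynomial.X ^ d i)
      (Finset.mem_univ (⟨0, by omega⟩ : Fin (m'+1))))
    simpa using sub_dvd_pow_sub_pow (1 : Polynomial ℚ) Polynomial.X (d ⟨0, by omega⟩)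
  obtain ⟨W, hW⟩ := hdvdF
  -- the polynomial identity Q = W - Pg * F
  have hFser : (F : PowerSeries ℚ) = ∏ i, (1 - (PowerSeries.X : PowerSeries ℚ) ^ d i) := by
    rw [hFdef, coe_prod_ps]
    exact Finset.prod_congr rfl fun i _ => by
      rw [Polynomial.coe_sub, Polynomial.coe_pow, Polynomial.coe_one, Polynomial.coe_X]
  have hQpoly : Q = W - Pg * F := by
    apply Polynomial.coe_injective
    show ((Q : Polynomial ℚ) : PowerSeries ℚ) = ((W - Pg * F : Polynomial ℚ) : PowerSeries ℚ)
    rw [Polynomial.coe_sub, Polynomial.coe_mul, ← hQ, ← hFser]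
    have hHil : hilbertSeries (S : Set ℕ)
        = PowerSeries.mk (fun _ => (1 : ℚ)) - (Pg : PowerSeries ℚ) :=
      eq_sub_of_add_eq (hilbert_add_gaps _ hfin)
    rw [hHil, sub_mul]
    congr 1
    have : (F : PowerSeries ℚ)
        = ((1 : PowerSeries ℚ) - PowerSeries.X) * (W : PowerSeries ℚ) := by
      rw [hW, Polynomial.coe_mul, Polynomial.coe_sub, Polynomial.coe_one, Polynomial.coe_X]
    rw [this, ← mul_assoc, mul_comm (PowerSeries.mk fun _ => (1:ℚ)), one_sub_X_mul_mk_one,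
      one_mul]
  -- the exponential substitution of F and W
  have hAF : Polynomial.aeval (PowerSeries.exp ℚ) F
      = PowerSeries.C ((-1) ^ (m' + 1) * D) * (PowerSeries.X ^ (m' + 1) * Aser d) :=
    aeval_prod_one_sub_X_pow d
  have hC1 : PowerSeries.constantCoeff (expDivFactor 1) = 1 := constCoeff_expDivFactor 1
  have hunit : expDivFactor 1 * (expDivFactor 1)⁻¹ = 1 :=
    PowerSeries.mul_inv_cancel _ (by rw [hC1]; norm_num)
  have hE1ne : (expDivFactor 1 : PowerSeries ℚ) ≠ 0 := by
    intro h; rw [h] at hC1; simp at hC1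
  have haevalsub : Polynomial.aeval (PowerSeries.exp ℚ) ((1 - Polynomial.X : Polynomial ℚ))
      = PowerSeries.C (-(1:ℚ)) * (PowerSeries.X * expDivFactor 1) := by
    have := aeval_one_sub_X_pow 1
    simpa using this
  have hWser : Polynomial.aeval (PowerSeries.exp ℚ) W
      = PowerSeries.C ((-1) ^ m' * D) * (PowerSeries.X ^ m' * Bser d) := by
    have hne : (PowerSeries.C (-(1:ℚ)) * (PowerSeries.X * expDivFactor 1)) ≠ 0 := by
      refine mul_ne_zero ?_ (mul_ne_zero PowerSeries.X_ne_zero hE1ne)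
      simpa using (PowerSeries.C_eq_zero_iff (-(1:ℚ))).not.mpr (by norm_num)
    apply mul_left_cancel₀ hne
    have h1 : PowerSeries.C (-(1:ℚ)) * (PowerSeries.X * expDivFactor 1)
        * Polynomial.aeval (PowerSeries.exp ℚ) W
        = Polynomial.aeval (PowerSeries.exp ℚ) F := by
      rw [← haevalsub, ← map_mul, ← hW]
    rw [h1, hAF, Bser]
    have hCC : PowerSeries.C ((-1:ℚ)^(m'+1) * D)
        = PowerSeries.C (-(1:ℚ)) * PowerSeries.C ((-1)^m' * D) := by
      rw [← map_mul]; congr 1; ring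
    rw [hCC]
    calc PowerSeries.C (-(1:ℚ)) * PowerSeries.C ((-1)^m' * D)
          * (PowerSeries.X ^ (m' + 1) * Aser d)
        = PowerSeries.C (-(1:ℚ)) * PowerSeries.C ((-1)^m' * D)
          * (PowerSeries.X ^ (m' + 1) * ((expDivFactor 1 * (expDivFactor 1)⁻¹) * Aser d)) := by
          rw [hunit, one_mul]
      _ = PowerSeries.C (-(1:ℚ)) * (PowerSeries.X * expDivFactor 1)
          * (PowerSeries.C ((-1)^m' * D)
            * (PowerSeries.X ^ m' * ((expDivFactor 1)⁻¹ * Aser d))) := by ring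
  -- the key series identity for 1 - Q
  have hkey : Polynomial.aeval (PowerSeries.exp ℚ) ((1 : Polynomial ℚ) - Q)
      = 1 - (PowerSeries.C ((-1) ^ m' * D) * (PowerSeries.X ^ m' * Bser d))
        + Polynomial.aeval (PowerSeries.exp ℚ) Pg
          * (PowerSeries.C ((-1) ^ (m' + 1) * D) * (PowerSeries.X ^ (m' + 1) * Aser d)) := by
    rw [← hWser, ← hAF, hQpoly]
    simp only [map_sub, map_mul, map_one]
    ring
  -- LHS as a coefficient
  have hLHS : Csum Q (m' + 1 + p) / (Nat.factorial (m' + 1 + p) : ℚ)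
      = PowerSeries.coeff (m' + 1 + p)
          (Polynomial.aeval (PowerSeries.exp ℚ) ((1 : Polynomial ℚ) - Q)) := by
    rw [coeff_aeval_exp, Csum, Polynomial.sum, Polynomial.sum, Finset.sum_div]
    exact Finset.sum_congr rfl fun k _ => by ring
  have hcoeff1 : PowerSeries.coeff (m' + 1 + p) (1 : PowerSeries ℚ) = 0 := by
    rw [PowerSeries.coeff_one]
    simp [Nat.add_eq_zero]
  have hcoeffB : PowerSeries.coeff (m' + 1 + p)
      (PowerSeries.C ((-1) ^ m' * D) * (PowerSeries.X ^ m' * Bser d))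
      = (-1) ^ m' * D * PowerSeries.coeff (p + 1) (Bser d) := by
    rw [PowerSeries.coeff_C_mul, show m' + 1 + p = (p + 1) + m' from by ring,
      PowerSeries.coeff_X_pow_mul]
  have hPgcoeff : ∀ r : ℕ, PowerSeries.coeff r (Polynomial.aeval (PowerSeries.exp ℚ) Pg)
      = (∑ g ∈ hfin.toFinset, (g : ℚ) ^ r) / (Nat.factorial r : ℚ) := by
    intro r
    rw [hPgdef, map_sum, map_sum, Finset.sum_div]
    refine Finset.sum_congr rfl fun g _ => ?_
    rw [map_pow, Polynomial.aeval_X, exp_pow_eq_rescale_exp, coeff_rescale, coeff_exp]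
    simp [div_eq_mul_inv]
  have hcoeffPgA : PowerSeries.coeff (m' + 1 + p)
      (Polynomial.aeval (PowerSeries.exp ℚ) Pg
        * (PowerSeries.C ((-1) ^ (m' + 1) * D) * (PowerSeries.X ^ (m' + 1) * Aser d)))
      = (-1) ^ (m' + 1) * D * ∑ r ∈ Finset.range (p + 1),
          ((∑ g ∈ hfin.toFinset, (g : ℚ) ^ r) / (Nat.factorial r : ℚ))
            * PowerSeries.coeff (p - r) (Aser d) := by
    rw [show Polynomial.aeval (PowerSeries.exp ℚ) Pg
        * (PowerSeries.C ((-1) ^ (m' + 1) * D) * (PowerSeries.X ^ (m' + 1) * Aser d))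
        = PowerSeries.C ((-1) ^ (m' + 1) * D)
          * (PowerSeries.X ^ (m' + 1)
            * (Polynomial.aeval (PowerSeries.exp ℚ) Pg * Aser d)) from by ring]
    rw [PowerSeries.coeff_C_mul, show m' + 1 + p = p + (m' + 1) from by ring,
      PowerSeries.coeff_X_pow_mul, PowerSeries.coeff_mul,
      Finset.Nat.sum_antidiagonal_eq_sum_range_succ_mk]
    congr 1
    exact Finset.sum_congr rfl fun r _ => by rw [hPgcoeff]
  -- put everything together
  rw [hLHS, hkey, map_add, map_sub, hcoeff1, hcoeffB, hcoeffPgA]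
  have hfact1 : (2:ℚ) ^ (p+1) / ((p:ℚ)+1) * ((Nat.factorial (p+1) : ℚ) / 2 ^ (p+1))
      = (Nat.factorial p : ℚ) := by
    have h2 : (2:ℚ) ^ (p+1) ≠ 0 := by positivity
    have hp1 : (p:ℚ) + 1 ≠ 0 := by positivity
    rw [Nat.factorial_succ]
    push_cast
    field_simp
  rw [← mul_assoc ((2:ℚ) ^ (p+1) / ((p:ℚ)+1)), hfact1]
  have hsum : ∑ r ∈ Finset.range (p + 1), (p.choose r : ℚ)
        * ((Nat.factorial (p - r) : ℚ) * PowerSeries.coeff (p - r) (Aser d))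
        * (∑ g ∈ hfin.toFinset, (g : ℚ) ^ r)
      = (Nat.factorial p : ℚ) * ∑ r ∈ Finset.range (p + 1),
          ((∑ g ∈ hfin.toFinset, (g : ℚ) ^ r) / (Nat.factorial r : ℚ))
            * PowerSeries.coeff (p - r) (Aser d) := by
    rw [Finset.mul_sum]
    refine Finset.sum_congr rfl fun r hr => ?_
    have hrp : r ≤ p := Nat.lt_succ_iff.mp (Finset.mem_range.mp hr)
    have hq : ((p.choose r : ℚ) * (Nat.factorial r : ℚ) * (Nat.factorial (p - r) : ℚ))
        = (Nat.factorial p : ℚ) := by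
      exact_mod_cast congrArg (Nat.cast : ℕ → ℚ)
        (Nat.choose_mul_factorial_mul_factorial hrp)
    have hrne : (Nat.factorial r : ℚ) ≠ 0 := Nat.cast_ne_zero.mpr r.factorial_ne_zero
    field_simp
    linear_combination ((∑ g ∈ hfin.toFinset, (g : ℚ) ^ r)
      * PowerSeries.coeff (p - r) (Aser d)) * hq
  rw [hsum]
  have hpne : (Nat.factorial p : ℚ) ≠ 0 := Nat.cast_ne_zero.mpr p.factorial_ne_zero
  field_simp
  ring
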